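/- (Quasi-fixed points and simulators.) Let C be a target–context category with intrinsic behaviors whose evaluation morphism eval : T⊗C₀ → B is an A-complete parametrization of maps C₀ → B. If there exists a universal simulator s of type C₀⊗C₀ → T⊗C₀ (i.e. with programs P = C₀), then every morphism g : B → B has a quasi-fixed point b : A → B. -/

import Mathlib

open CategoryTheory MonoidalCategory

universe w v u v' u'

/-- A gs-monoidal category: a symmetric monoidal category in which every object carries a
commutative comonoid structure (copy and discard), compatible with tensor products. -/
class GSCat (C : Type u) [Category.{v} C] [MonoidalCategory C] [SymmetricCategory C] where
  copy : ∀ A : C, A ⟶ A ⊗ A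
  discard : ∀ A : C, A ⟶ 𝟙_ C
  copy_assoc : ∀ A : C, copy A ≫ (copy A ▷ A) ≫ (α_ A A A).hom = copy A ≫ (A ◁ copy A)
  copy_comm : ∀ A : C, copy A ≫ (β_ A A).hom = copy A
  copy_counit_left : ∀ A : C, copy A ≫ (discard A ▷ A) ≫ (λ_ A).hom = 𝟙 A
  copy_counit_right : ∀ A : C, copy A ≫ (A ◁ discard A) ≫ (ρ_ A).hom = 𝟙 A
  copy_tensor : ∀ A X : C, copy (A ⊗ X) = (copy A ⊗ₘ copy X) ≫ tensorμ A A X X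
  discard_tensor : ∀ A X : C, discard (A ⊗ X) = (discard A ⊗ₘ discard X) ≫ (λ_ (𝟙_ C)).hom
  discard_unit : discard (𝟙_ C) = 𝟙 (𝟙_ C)

variable {C : Type u} [Category.{v} C] [MonoidalCategory C] [SymmetricCategory C] [GSCat C]

/-- The domain `dom(f) = ρ_A ∘ (id_A ⊗ (ε_X ∘ f)) ∘ Δ_A` of a morphism `f : A ⟶ X`. -/
def gsDom {A X : C} (f : A ⟶ X) : A ⟶ A :=
  GSCat.copy A ≫ (A ◁ (f ≫ GSCat.discard X)) ≫ (ρ_ A).hom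

/-- A morphism is normalized if `f ∘ dom(f) = f`. -/
def GsNormalized {A X : C} (f : A ⟶ X) : Prop := gsDom f ≫ f = f

/-- A morphism is functional if `Δ_X ∘ f = (f ⊗ f) ∘ Δ_A`. -/
def GsFunctional {A X : C} (f : A ⟶ X) : Prop :=
  f ≫ GSCat.copy X = GSCat.copy A ≫ (f ⊗ₘ f)

/-- A morphism is total if `ε_X ∘ f = ε_A`. -/
def GsTotal {A X : C} (f : A ⟶ X) : Prop := f ≫ GSCat.discard X = GSCat.discard A

/-- `f ⊒ g` : `f` agrees with `g` on the domain of `g`, i.e. `f ∘ dom(g) = g`. -/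
def GsRestrict {A X : C} (f g : A ⟶ X) : Prop := gsDom g ≫ f = g

/-- A gs-monoidal category is normalized if all of its morphisms are normalized. -/
class GsNormalizedCat (C : Type u) [Category.{v} C] [MonoidalCategory C]
    [SymmetricCategory C] [GSCat C] : Prop where
  norm : ∀ {A X : C} (f : A ⟶ X), GsNormalized f

/-- Composition of set-valued relations (first `f`, then `g`). -/
def RComp {α β γ : Type*} (f : α → Set β) (g : β → Set γ) : α → Set γ :=
  fun a => {c | ∃ b ∈ f a, c ∈ g b}

/-- Existence of an enhancement map `U → V` with respect to `pre`
(read `pre x y` as "`x ⪰ y`"): a map sending each `u ∈ U` to an element of `V` above it. -/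
def IsEnh {X : Type w} (pre : X → X → Prop) (U V : Set X) : Prop :=
  ∃ e : U → V, ∀ u : U, pre (e u : X) (u : X)

/-- Existence of a degradation map `V → U`: a map sending each `v ∈ V` to an element of `U`
below it. -/
def IsDeg {X : Type w} (pre : X → X → Prop) (U V : Set X) : Prop :=
  ∃ d : V → U, ∀ v : V, pre (v : X) (d v : X)

/-- The imitation relation: `ν` imitates `μ` iff for every `a` in the domain of `μ` there are
an enhancement map `μ a → ν a` and a degradation map `ν a → μ a`. -/
def Imitates {α : Type*} {X : Type w} (pre : X → X → Prop) (ν μ : α → Set X) : Prop :=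
  ∀ a : α, (μ a).Nonempty → IsEnh pre (μ a) (ν a) ∧ IsDeg pre (μ a) (ν a)

/-- A simulator: a morphism `s : P ⊗ C0 ⟶ T ⊗ C0` of the form
`s = (s_T ⊗ s_C) ∘ (Δ_P ⊗ id)` with functional compiler `s_T : P ⟶ T` and
context reduction `s_C : P ⊗ C0 ⟶ C0`. -/
structure Simulator {C : Type u} [Category.{v} C] [MonoidalCategory C] [SymmetricCategory C]
    [GSCat C] (T C0 P : C) where
  s : P ⊗ C0 ⟶ T ⊗ C0
  sT : P ⟶ T
  sC : P ⊗ C0 ⟶ C0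
  sT_functional : GsFunctional sT
  split : s = (GSCat.copy P ▷ C0) ≫ (α_ P P C0).hom ≫ (sT ⊗ₘ sC)

/-- A target--context category with intrinsic behaviors: a behavior structure (a lax
gs-monoidal functor to `Rel`, encoded concretely) for which the evaluation is the shadow
of a morphism `eval : T ⊗ C0 ⟶ B` of the ambient category, i.e. `Beh(eval)` is the
(graph of the) function `evalHat`, together with a preorder `brel` on `Beh(B)`. -/
structure IntrinsicBS (C : Type u) [Category.{v} C] [MonoidalCategory C]
    [SymmetricCategory C] [GSCat C] (T C0 B : C) where
  obj : C → Type w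
  map : ∀ {A X : C}, (A ⟶ X) → obj A → Set (obj X)
  map_id : ∀ {A : C} (a : obj A), map (𝟙 A) a = {a}
  map_comp : ∀ {A X Y : C} (f : A ⟶ X) (g : X ⟶ Y) (a : obj A),
    map (f ≫ g) a = {y | ∃ x ∈ map f a, y ∈ map g x}
  unitSet : Set (obj (𝟙_ C))
  mul : ∀ A X : C, obj A → obj X → Set (obj (A ⊗ X))
  mul_natural : ∀ {A A' X X' : C} (f : A ⟶ A') (g : X ⟶ X')
      (a : obj A) (x : obj X) (y : obj (A' ⊗ X')),
    (∃ a' ∈ map f a, ∃ x' ∈ map g x, y ∈ mul A' X' a' x') ↔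
      ∃ z ∈ mul A X a x, y ∈ map (f ⊗ₘ g) z
  mul_assoc : ∀ {A X Y : C} (a : obj A) (x : obj X) (y : obj Y) (u : obj (A ⊗ (X ⊗ Y))),
    (∃ z ∈ mul A X a x, ∃ v ∈ mul (A ⊗ X) Y z y, u ∈ map (α_ A X Y).hom v) ↔
      ∃ t ∈ mul X Y x y, u ∈ mul A (X ⊗ Y) a t
  mul_left_unit : ∀ {A : C} (a b : obj A),
    (∃ i ∈ unitSet, ∃ z ∈ mul (𝟙_ C) A i a, b ∈ map (λ_ A).hom z) ↔ b = a
  mul_right_unit : ∀ {A : C} (a b : obj A),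
    (∃ i ∈ unitSet, ∃ z ∈ mul A (𝟙_ C) a i, b ∈ map (ρ_ A).hom z) ↔ b = a
  mul_braiding : ∀ {A X : C} (a : obj A) (x : obj X) (u : obj (X ⊗ A)),
    (∃ z ∈ mul A X a x, u ∈ map (β_ A X).hom z) ↔ u ∈ mul X A x a
  map_copy : ∀ {A : C} (a : obj A), map (GSCat.copy A) a = mul A A a a
  map_discard : ∀ {A : C} (a : obj A), map (GSCat.discard A) a = unitSet
  eval : T ⊗ C0 ⟶ B
  evalHat : obj (T ⊗ C0) → obj B
  eval_beh : ∀ x : obj (T ⊗ C0), map eval x = {evalHat x}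
  brel : obj B → obj B → Prop
  brel_refl : ∀ b : obj B, brel b b
  brel_trans : ∀ {b₁ b₂ b₃ : obj B}, brel b₁ b₂ → brel b₂ b₃ → brel b₁ b₃

/-- The ambient imitation relation induced by an intrinsic behavior structure. -/
def IntrinsicBS.aim {T C0 B : C} (β : IntrinsicBS C T C0 B) {A : C}
    (f g : A ⟶ T ⊗ C0) : Prop :=
  Imitates β.brel (fun a => β.evalHat '' β.map f a) (fun a => β.evalHat '' β.map g a)

/-- `F : P ⊗ C0 ⟶ B` is an `A`-complete parametrization of maps `C0 → B` if every
`f : A ⊗ C0 ⟶ B` is parametrized, up to imitation, by a functional `p : A ⟶ P`. -/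
def IntrinsicBS.IsCompleteParam {T C0 B : C} (β : IntrinsicBS C T C0 B) (A P : C)
    (F : P ⊗ C0 ⟶ B) : Prop :=
  ∀ f : A ⊗ C0 ⟶ B, ∃ p : A ⟶ P, GsFunctional p ∧
    Imitates β.brel (β.map ((p ▷ C0) ≫ F)) (β.map f)

/-- `b : A ⟶ B` is a quasi-fixed point of `g : B ⟶ B` if `Beh(b) ⪰ᵢₘ Beh(g ∘ b)`. -/
def IntrinsicBS.QuasiFixed {T C0 B : C} (β : IntrinsicBS C T C0 B) {A : C}
    (b : A ⟶ B) (g : B ⟶ B) : Prop :=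
  Imitates β.brel (β.map b) (β.map (b ≫ g))

/-- Universality of a simulator with respect to the ambient imitation relation induced by an
intrinsic behavior structure. -/
def IntrinsicBS.IsUniversal {T C0 B : C} (β : IntrinsicBS C T C0 B) {P : C}
    (s : Simulator T C0 P) : Prop :=
  ∃ r : T ⟶ P, GsFunctional r ∧ β.aim ((r ▷ C0) ≫ s.s) (𝟙 (T ⊗ C0))

/- ===== auxiliary lemmas ===== -/

section Aux

private lemma aux_gs_func_comp {A X Y : C} {p : A ⟶ X} {q : X ⟶ Y}
    (hp : GsFunctional p) (hq : GsFunctional q) : GsFunctional (p ≫ q) := by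
  unfold GsFunctional at *
  calc (p ≫ q) ≫ GSCat.copy Y = p ≫ (q ≫ GSCat.copy Y) := by rw [Category.assoc]
    _ = p ≫ (GSCat.copy X ≫ (q ⊗ₘ q)) := by rw [hq]
    _ = (p ≫ GSCat.copy X) ≫ (q ⊗ₘ q) := by rw [Category.assoc]
    _ = (GSCat.copy A ≫ (p ⊗ₘ p)) ≫ (q ⊗ₘ q) := by rw [hp]
    _ = GSCat.copy A ≫ ((p ≫ q) ⊗ₘ (p ≫ q)) := by
        rw [Category.assoc, tensorHom_comp_tensorHom]

private lemma aux_copy_whiskerLeft_pi2 {A X : C} (u : A ⟶ X) :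
    GSCat.copy A ≫ (A ◁ u) ≫ (GSCat.discard A ▷ X) ≫ (λ_ X).hom = u := by
  rw [whisker_exchange_assoc, leftUnitor_naturality,
    reassoc_of% (GSCat.copy_counit_left A)]

private lemma aux_copy_whiskerLeft_gsDom {X Y : C} (k : X ⟶ Y) :
    GSCat.copy X ≫ (X ◁ gsDom k) = gsDom k ≫ GSCat.copy X := by
  unfold gsDom
  calc GSCat.copy X ≫ (X ◁ (GSCat.copy X ≫ (X ◁ (k ≫ GSCat.discard Y)) ≫ (ρ_ X).hom))
      = GSCat.copy X ≫ (X ◁ GSCat.copy X) ≫ (X ◁ (X ◁ (k ≫ GSCat.discard Y))) ≫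
          (X ◁ (ρ_ X).hom) := by
        simp only [MonoidalCategory.whiskerLeft_comp, Category.assoc]
    _ = GSCat.copy X ≫ (GSCat.copy X ▷ X) ≫ (α_ X X X).hom ≫
          (X ◁ (X ◁ (k ≫ GSCat.discard Y))) ≫ (X ◁ (ρ_ X).hom) := by
        rw [← reassoc_of% (GSCat.copy_assoc X)]
    _ = GSCat.copy X ≫ (GSCat.copy X ▷ X) ≫ ((X ⊗ X) ◁ (k ≫ GSCat.discard Y)) ≫
          (α_ X X (𝟙_ C)).hom ≫ (X ◁ (ρ_ X).hom) := by
        rw [← associator_naturality_right_assoc]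
    _ = GSCat.copy X ≫ (GSCat.copy X ▷ X) ≫ ((X ⊗ X) ◁ (k ≫ GSCat.discard Y)) ≫
          (ρ_ (X ⊗ X)).hom := by
        rw [whiskerLeft_rightUnitor, Iso.hom_inv_id_assoc]
    _ = GSCat.copy X ≫ (X ◁ (k ≫ GSCat.discard Y)) ≫ (GSCat.copy X ▷ 𝟙_ C) ≫
          (ρ_ (X ⊗ X)).hom := by
        rw [whisker_exchange_assoc]
    _ = (GSCat.copy X ≫ (X ◁ (k ≫ GSCat.discard Y)) ≫ (ρ_ X).hom) ≫ GSCat.copy X := by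
        rw [rightUnitor_naturality]
        simp only [Category.assoc]

private lemma aux_imitates_of_pointwise {α : Type u'} {X : Type w} (pre : X → X → Prop)
    (ν μ : α → Set X)
    (henh : ∀ a, ∀ u ∈ μ a, ∃ v ∈ ν a, pre v u)
    (hdeg : ∀ a, ∀ v ∈ ν a, ∃ u ∈ μ a, pre v u) : Imitates pre ν μ := by
  intro a _
  constructor
  · exact ⟨fun u => ⟨(henh a u u.2).choose, (henh a u u.2).choose_spec.1⟩,
      fun u => (henh a u u.2).choose_spec.2⟩
  · exact ⟨fun v => ⟨(hdeg a v v.2).choose, (hdeg a v v.2).choose_spec.1⟩,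
      fun v => (hdeg a v v.2).choose_spec.2⟩

private lemma aux_imitates_enh_point {α : Type u'} {X : Type w} {pre : X → X → Prop}
    {ν μ : α → Set X} (h : Imitates pre ν μ) {a : α} {u : X} (hu : u ∈ μ a) :
    ∃ v ∈ ν a, pre v u := by
  obtain ⟨e, he⟩ := (h a ⟨u, hu⟩).1
  exact ⟨e ⟨u, hu⟩, (e ⟨u, hu⟩).2, he ⟨u, hu⟩⟩

private lemma aux_imitates_deg_point {α : Type u'} {X : Type w} {pre : X → X → Prop}
    {ν μ : α → Set X} (h : Imitates pre ν μ) {a : α} (hne : (μ a).Nonempty)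
    {v : X} (hv : v ∈ ν a) : ∃ u ∈ μ a, pre v u := by
  obtain ⟨d, hd⟩ := (h a hne).2
  exact ⟨d ⟨v, hv⟩, (d ⟨v, hv⟩).2, hd ⟨v, hv⟩⟩

namespace IntrinsicBS

variable {T C0 B : C} (β : IntrinsicBS C T C0 B)

private lemma aux_mem_map_comp {A X Y : C} (p : A ⟶ X) (q : X ⟶ Y) (a : β.obj A)
    (y : β.obj Y) : y ∈ β.map (p ≫ q) a ↔ ∃ x ∈ β.map p a, y ∈ β.map q x := by
  rw [β.map_comp]; exact Iff.rfl

private lemma aux_mulnat_whiskerRight {A A' X : C} (p : A ⟶ A') (a : β.obj A)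
    (x : β.obj X) (y : β.obj (A' ⊗ X)) :
    (∃ a' ∈ β.map p a, y ∈ β.mul A' X a' x) ↔
      ∃ z ∈ β.mul A X a x, y ∈ β.map (p ▷ X) z := by
  have h := β.mul_natural p (𝟙 X) a x y
  rw [tensorHom_id] at h
  constructor
  · rintro ⟨a', ha, hy⟩
    exact h.mp ⟨a', ha, x, by rw [β.map_id]; exact rfl, hy⟩
  · rintro ⟨z, hz, hy⟩
    obtain ⟨a', ha, x', hx', hy'⟩ := h.mpr ⟨z, hz, hy⟩
    rw [β.map_id] at hx'
    obtain rfl : x' = x := hx'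
    exact ⟨a', ha, hy'⟩

private lemma aux_mulnat_whiskerLeft {A X X' : C} (p : X ⟶ X') (a : β.obj A)
    (x : β.obj X) (y : β.obj (A ⊗ X')) :
    (∃ x' ∈ β.map p x, y ∈ β.mul A X' a x') ↔
      ∃ z ∈ β.mul A X a x, y ∈ β.map (A ◁ p) z := by
  have h := β.mul_natural (𝟙 A) p a x y
  rw [id_tensorHom] at h
  constructor
  · rintro ⟨x', hx, hy⟩
    exact h.mp ⟨a, by rw [β.map_id]; exact rfl, x', hx, hy⟩
  · rintro ⟨z, hz, hy⟩
    obtain ⟨a', ha', x', hx', hy'⟩ := h.mpr ⟨z, hz, hy⟩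
    rw [β.map_id] at ha'
    obtain rfl : a' = a := ha'
    exact ⟨x', hx', hy'⟩

private lemma aux_unitSet_nonempty {A : C} (a : β.obj A) : β.unitSet.Nonempty := by
  obtain ⟨i, hi, -⟩ := (β.mul_left_unit a a).mpr rfl
  exact ⟨i, hi⟩

private lemma aux_pi2_nonempty {A X : C} (ξ : β.obj (A ⊗ X)) :
    (β.map ((GSCat.discard A ▷ X) ≫ (λ_ X).hom) ξ).Nonempty := by
  obtain ⟨i, hi⟩ := β.aux_unitSet_nonempty ξ
  have h1 : i ∈ β.map ((GSCat.discard A ⊗ₘ GSCat.discard X) ≫ (λ_ (𝟙_ C)).hom) ξ := by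
    rw [← GSCat.discard_tensor, β.map_discard]; exact hi
  obtain ⟨y, hy, -⟩ := (β.aux_mem_map_comp _ _ _ _).mp h1
  rw [MonoidalCategory.tensorHom_def] at hy
  obtain ⟨y₁, hy₁, -⟩ := (β.aux_mem_map_comp _ _ _ _).mp hy
  have h3 : y₁ ∈ β.map ((λ_ X).hom ≫ (λ_ X).inv) y₁ := by
    rw [Iso.hom_inv_id, β.map_id]; exact rfl
  obtain ⟨z, hz, -⟩ := (β.aux_mem_map_comp _ _ _ _).mp h3
  exact ⟨z, (β.aux_mem_map_comp _ _ _ _).mpr ⟨y₁, hy₁, hz⟩⟩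

private lemma aux_pi2_eq {A X : C} {a : β.obj A} {x : β.obj X} {ξ : β.obj (A ⊗ X)}
    (hξ : ξ ∈ β.mul A X a x) {y : β.obj X}
    (hy : y ∈ β.map ((GSCat.discard A ▷ X) ≫ (λ_ X).hom) ξ) : y = x := by
  obtain ⟨y₀, hy₀, hyl⟩ := (β.aux_mem_map_comp _ _ _ _).mp hy
  obtain ⟨i, hi, hy₀'⟩ :=
    (β.aux_mulnat_whiskerRight (GSCat.discard A) a x y₀).mpr ⟨ξ, hξ, hy₀⟩
  rw [β.map_discard] at hi
  exact (β.mul_left_unit x y).mp ⟨i, hi, y₀, hy₀', hyl⟩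

private lemma aux_mem_gsDom {X Y : C} (k : X ⟶ Y) (c c' : β.obj X) :
    c' ∈ β.map (gsDom k) c ↔ c' = c ∧ (β.map k c).Nonempty := by
  unfold gsDom
  constructor
  · intro h
    obtain ⟨z, hz, h2⟩ := (β.aux_mem_map_comp _ _ _ _).mp h
    rw [β.map_copy] at hz
    obtain ⟨y, hy, hc'⟩ := (β.aux_mem_map_comp _ _ _ _).mp h2
    obtain ⟨i, hi, hy'⟩ :=
      (β.aux_mulnat_whiskerLeft (k ≫ GSCat.discard Y) c c y).mpr ⟨z, hz, hy⟩
    obtain ⟨w, hw, hiu⟩ := (β.aux_mem_map_comp _ _ _ _).mp hi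
    rw [β.map_discard] at hiu
    exact ⟨(β.mul_right_unit c c').mp ⟨i, hiu, y, hy', hc'⟩, ⟨w, hw⟩⟩
  · rintro ⟨rfl, w, hw⟩
    obtain ⟨i, hiu, y, hy, hρ⟩ := (β.mul_right_unit c' c').mpr rfl
    have hi : i ∈ β.map (k ≫ GSCat.discard Y) c' :=
      (β.aux_mem_map_comp _ _ _ _).mpr ⟨w, hw, by rw [β.map_discard]; exact hiu⟩
    obtain ⟨z, hz, hy'⟩ :=
      (β.aux_mulnat_whiskerLeft (k ≫ GSCat.discard Y) c' c' y).mp ⟨i, hi, hy⟩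
    exact (β.aux_mem_map_comp _ _ _ _).mpr ⟨z, by rw [β.map_copy]; exact hz,
      (β.aux_mem_map_comp _ _ _ _).mpr ⟨y, hy', hρ⟩⟩

end IntrinsicBS

end Aux

/-- Quasi-fixed points and simulators: if `eval` is an `A`-complete
parametrization of maps `C0 → B` and there exists a universal simulator with programs
`P = C0`, then every `g : B ⟶ B` has a quasi-fixed point. -/
theorem quasi_fixed_from_universal [GsNormalizedCat C] {T C0 B : C}
    (β : IntrinsicBS C T C0 B) {A : C}
    (heval : β.IsCompleteParam A T β.eval)
    (s : Simulator T C0 C0) (hs : β.IsUniversal s)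
    (g : B ⟶ B) : ∃ b : A ⟶ B, β.QuasiFixed b g := by
  classical
  obtain ⟨r, hrf, hr⟩ := hs
  have hr' : Imitates β.brel (fun x => β.evalHat '' β.map ((r ▷ C0) ≫ s.s) x)
      (fun x => β.evalHat '' β.map (𝟙 (T ⊗ C0)) x) := hr
  -- the diagonal morphism and its parametrization
  set k : C0 ⟶ B := GSCat.copy C0 ≫ s.s ≫ β.eval ≫ g with hk
  set f : A ⊗ C0 ⟶ B := ((GSCat.discard A ▷ C0) ≫ (λ_ C0).hom) ≫ k with hf
  obtain ⟨t, htf, ht⟩ := heval f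
  set cs : A ⟶ C0 := (t ≫ r) ≫ gsDom k with hcs
  set b : A ⟶ B := cs ≫ GSCat.copy C0 ≫ s.s ≫ β.eval with hb
  refine ⟨b, ?_⟩
  -- categorical identities
  have hfunc : GsFunctional (t ≫ r) := aux_gs_func_comp htf hrf
  have hI2 : GSCat.copy A ≫ (A ◁ cs) ≫ ((t ≫ r) ▷ C0) = cs ≫ GSCat.copy C0 := by
    have e1 : (A ◁ cs) ≫ ((t ≫ r) ▷ C0) = (t ≫ r) ⊗ₘ cs := (tensorHom_def' (t ≫ r) cs).symm
    have e2 : (t ≫ r) ⊗ₘ cs = ((t ≫ r) ⊗ₘ (t ≫ r)) ≫ (C0 ◁ gsDom k) := by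
      rw [hcs, ← id_tensorHom, tensorHom_comp_tensorHom, Category.comp_id]
    rw [e1, e2, ← Category.assoc, ← hfunc, Category.assoc, aux_copy_whiskerLeft_gsDom,
      ← Category.assoc, ← hcs]
  have hI2r := reassoc_of% hI2
  have hb_eq : b = (GSCat.copy A ≫ (A ◁ cs)) ≫ (t ▷ C0) ≫ ((r ▷ C0) ≫ s.s) ≫ β.eval := by
    rw [hb, ← hI2r]
    simp only [comp_whiskerRight, Category.assoc]
  have hI1r := reassoc_of% (aux_copy_whiskerLeft_pi2 cs)
  have hbg_eq : b ≫ g = (GSCat.copy A ≫ (A ◁ cs)) ≫ f := by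
    rw [hb, hf, hk]
    simp only [Category.assoc]
    rw [hI1r]
  -- behaviour-level decomposition of the diagonal part
  have hd'mem : ∀ (a : β.obj A) (ξ : β.obj (A ⊗ C0)),
      ξ ∈ β.map (GSCat.copy A ≫ (A ◁ cs)) a ↔ ∃ c ∈ β.map cs a, ξ ∈ β.mul A C0 a c := by
    intro a ξ
    rw [β.aux_mem_map_comp]
    constructor
    · rintro ⟨z, hz, hξ⟩
      rw [β.map_copy] at hz
      exact (β.aux_mulnat_whiskerLeft cs a a ξ).mpr ⟨z, hz, hξ⟩
    · intro h
      obtain ⟨z, hz, hξ⟩ := (β.aux_mulnat_whiskerLeft cs a a ξ).mp h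
      exact ⟨z, by rw [β.map_copy]; exact hz, hξ⟩
  -- consequences of universality
  have H2enh : ∀ x : β.obj (T ⊗ C0),
      ∃ w ∈ β.map ((r ▷ C0) ≫ s.s) x, β.brel (β.evalHat w) (β.evalHat x) := by
    intro x
    have hmem : β.evalHat x ∈ β.evalHat '' β.map (𝟙 (T ⊗ C0)) x :=
      ⟨x, by rw [β.map_id]; exact rfl, rfl⟩
    obtain ⟨v, hv, hbr⟩ := aux_imitates_enh_point hr' hmem
    obtain ⟨w, hw, rfl⟩ := hv
    exact ⟨w, hw, hbr⟩
  have H2deg : ∀ x : β.obj (T ⊗ C0), ∀ w ∈ β.map ((r ▷ C0) ≫ s.s) x,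
      β.brel (β.evalHat w) (β.evalHat x) := by
    intro x w hw
    have hne : (β.evalHat '' β.map (𝟙 (T ⊗ C0)) x).Nonempty :=
      ⟨β.evalHat x, x, by rw [β.map_id]; exact rfl, rfl⟩
    obtain ⟨u, hu, hbr⟩ := aux_imitates_deg_point hr' hne ⟨w, hw, rfl⟩
    obtain ⟨x', hx', rfl⟩ := hu
    rw [β.map_id] at hx'
    obtain rfl : x' = x := hx'
    exact hbr
  -- final assembly
  show Imitates β.brel (β.map b) (β.map (b ≫ g))
  apply aux_imitates_of_pointwise
  · -- enhancement
    intro a u hu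
    rw [hbg_eq] at hu
    obtain ⟨ξ, hξ, hu⟩ := (β.aux_mem_map_comp _ _ _ _).mp hu
    obtain ⟨v₁, hv₁, hbr₁⟩ := aux_imitates_enh_point ht hu
    obtain ⟨x₁, hx₁, hv₁e⟩ := (β.aux_mem_map_comp _ _ _ _).mp hv₁
    rw [β.eval_beh] at hv₁e
    obtain rfl : v₁ = β.evalHat x₁ := hv₁e
    obtain ⟨w₁, hw₁, hbr₂⟩ := H2enh x₁
    refine ⟨β.evalHat w₁, ?_, β.brel_trans hbr₂ hbr₁⟩
    rw [hb_eq]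
    exact (β.aux_mem_map_comp _ _ _ _).mpr ⟨ξ, hξ,
      (β.aux_mem_map_comp _ _ _ _).mpr ⟨x₁, hx₁,
        (β.aux_mem_map_comp _ _ _ _).mpr ⟨w₁, hw₁, by rw [β.eval_beh]; exact rfl⟩⟩⟩
  · -- degradation
    intro a v hv
    rw [hb_eq] at hv
    obtain ⟨ξ, hξd, hv⟩ := (β.aux_mem_map_comp _ _ _ _).mp hv
    obtain ⟨x, hx, hv⟩ := (β.aux_mem_map_comp _ _ _ _).mp hv
    obtain ⟨w, hw, hv⟩ := (β.aux_mem_map_comp _ _ _ _).mp hv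
    rw [β.eval_beh] at hv
    obtain rfl : v = β.evalHat w := hv
    obtain ⟨c, hc, hξ⟩ := (hd'mem a ξ).mp hξd
    rw [hcs] at hc
    obtain ⟨c₀, hc₀, hcg⟩ := (β.aux_mem_map_comp _ _ _ _).mp hc
    obtain ⟨hceq, w₀, hw₀⟩ := (β.aux_mem_gsDom k c₀ c).mp hcg
    subst hceq
    obtain ⟨c₁, hc₁⟩ := β.aux_pi2_nonempty ξ
    have hcc : c₁ = c := β.aux_pi2_eq hξ hc₁
    subst hcc
    have hne : (β.map f ξ).Nonempty :=
      ⟨w₀, by rw [hf]; exact (β.aux_mem_map_comp _ _ _ _).mpr ⟨c₁, hc₁, hw₀⟩⟩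
    have hvx : β.evalHat x ∈ β.map ((t ▷ C0) ≫ β.eval) ξ :=
      (β.aux_mem_map_comp _ _ _ _).mpr ⟨x, hx, by rw [β.eval_beh]; exact rfl⟩
    obtain ⟨u, hu, hbr₁⟩ := aux_imitates_deg_point ht hne hvx
    refine ⟨u, ?_, β.brel_trans (H2deg x w hw) hbr₁⟩
    rw [hbg_eq]
    exact (β.aux_mem_map_comp _ _ _ _).mpr ⟨ξ, hξd, hu⟩
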